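/- Let T be a vector space, S = ⊕_{d≥0} Sᵈ T its symmetric algebra, and I ⊆ S a homogeneous ideal. Work in the power series ring S[[t]], and for k ≥ 0 let J_k be the ideal of S[[t]] generated by I and t^k. Let v(t) = v₀ + t v₁ + t² v₂ + ⋯ ∈ S[[t]] be a curve with each v_i ∈ S¹T = T. If m > 0, v(t)² ∈ J_m, and v₀² ∈ I, then for every s ≥ 2 one has v(t)^s ∈ J_{m+s-2}. -/

import Mathlib

open PowerSeries Finset

section Helpers

variable {R : Type*} [CommRing R]

/-- If a power series lies in the ideal generated by `C '' I` and `X^k`, then all its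
coefficients of index `< k` lie in `I`. -/
lemma coeff_mem_of_mem_spanJ (I : Ideal R) (k : ℕ) (P : R⟦X⟧)
    (hP : P ∈ Ideal.span ((C (R := R)) '' (I : Set R) ∪ {(X : R⟦X⟧) ^ k})) :
    ∀ i < k, coeff (R := R) i P ∈ I := by
  let K : Ideal R⟦X⟧ :=
    { carrier := {Q | ∀ i < k, coeff (R := R) i Q ∈ I}
      add_mem' := fun {a b} ha hb i hi => by
        rw [map_add]; exact I.add_mem (ha i hi) (hb i hi)
      zero_mem' := fun i hi => by rw [map_zero]; exact I.zero_mem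
      smul_mem' := by
        intro c Q hQ i hi
        rw [smul_eq_mul, coeff_mul]
        refine I.sum_mem fun p hp => I.mul_mem_left _ (hQ p.2 ?_)
        have := Finset.HasAntidiagonal.mem_antidiagonal.mp hp
        omega }
  have hle : Ideal.span ((C (R := R)) '' (I : Set R) ∪ {(X : R⟦X⟧) ^ k}) ≤ K := by
    rw [Ideal.span_le]
    rintro Q (⟨a, ha, rfl⟩ | hQ)
    · intro i hi
      rw [coeff_C]
      split
      · exact ha
      · exact I.zero_mem
    · intro i hi
      rcases hQ with rfl
      rw [coeff_X_pow, if_neg (by omega)]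
      exact I.zero_mem
  exact hle hP

/-- Conversely, if all coefficients of index `< k` lie in `I`, the series lies in the ideal
generated by `C '' I` and `X^k`. -/
lemma mem_spanJ_of_coeff_mem (I : Ideal R) (k : ℕ) (P : R⟦X⟧)
    (h : ∀ i < k, coeff (R := R) i P ∈ I) :
    P ∈ Ideal.span ((C (R := R)) '' (I : Set R) ∪ {(X : R⟦X⟧) ^ k}) := by
  induction k generalizing P with
  | zero =>
    have h1 : (1 : R⟦X⟧) ∈ Ideal.span ((C (R := R)) '' (I : Set R) ∪ {(X : R⟦X⟧) ^ 0}) := by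
      apply Ideal.subset_span
      right; simp
    exact (Ideal.eq_top_iff_one _).mpr h1 ▸ Submodule.mem_top
  | succ k ih =>
    rw [eq_X_mul_shift_add_const P]
    apply Ideal.add_mem
    · -- X * shift
      have hs : (mk fun p => coeff (R := R) (p + 1) P) ∈
          Ideal.span ((C (R := R)) '' (I : Set R) ∪ {(X : R⟦X⟧) ^ k}) := by
        apply ih
        intro i hi
        rw [coeff_mk]
        exact h (i + 1) (by omega)
      refine Submodule.span_induction
        (p := fun Q _ => X * Q ∈ Ideal.span ((C (R := R)) '' (I : Set R) ∪ {(X : R⟦X⟧) ^ (k + 1)}))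
        ?_ ?_ ?_ ?_ hs
      · rintro Q (⟨a, ha, rfl⟩ | hQ)
        · exact Ideal.mul_mem_left _ _ (Ideal.subset_span (Or.inl ⟨a, ha, rfl⟩))
        · rcases hQ with rfl
          rw [← pow_succ']
          exact Ideal.subset_span (Or.inr rfl)
      · simp
      · intro x y _ _ hx hy
        rw [mul_add]; exact Ideal.add_mem _ hx hy
      · intro c x _ hx
        rw [smul_eq_mul, mul_left_comm]
        exact Ideal.mul_mem_left _ _ hx
    · apply Ideal.subset_span
      have h0 := h 0 (Nat.succ_pos k)
      rw [coeff_zero_eq_constantCoeff] at h0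
      exact Or.inl ⟨_, h0, rfl⟩

/-- Key algebraic fact: `m • (v₀ · coeff m (v²)) ∈ I` whenever all coefficients of `v²` of
index `< m` lie in `I`.  Proof: differentiate `v³`. -/
lemma key_smul_mem (I : Ideal R) (v : R⟦X⟧) (m : ℕ) (hm : 0 < m)
    (hc : ∀ i < m, coeff (R := R) i (v ^ 2) ∈ I) :
    (m : R) * (coeff (R := R) 0 v * coeff (R := R) m (v ^ 2)) ∈ I := by
  -- Step 1 : m * coeff m (v^3) ∈ I
  have h3 : (m : R) * coeff (R := R) m (v ^ 3) ∈ I := by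
    have hD : coeff (R := R) (m - 1) (d⁄dX R (v ^ 3)) = coeff (R := R) m (v ^ 3) * m := by
      rw [coeff_derivative, show m - 1 + 1 = m from by omega, Nat.cast_pred hm]
      ring
    have hmem : coeff (R := R) (m - 1) (d⁄dX R (v ^ 3)) ∈ I := by
      rw [Derivation.leibniz_pow, show (3 : ℕ) - 1 = 2 from rfl, map_nsmul, nsmul_eq_mul]
      refine I.mul_mem_left _ ?_
      rw [smul_eq_mul, coeff_mul]
      refine I.sum_mem fun p hp => I.mul_mem_right _ (hc p.1 ?_)
      have := Finset.HasAntidiagonal.mem_antidiagonal.mp hp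
      omega
    rw [hD] at hmem
    rwa [mul_comm] at hmem
  -- Step 2 : expand coeff m (v^3)
  have hexp : coeff (R := R) m (v ^ 3) =
      ∑ p ∈ antidiagonal m, coeff (R := R) p.1 v * coeff (R := R) p.2 (v ^ 2) := by
    rw [show v ^ 3 = v * v ^ 2 by ring, coeff_mul]
  have hmem0 : ((0, m) : ℕ × ℕ) ∈ antidiagonal m := by simp
  have hsplit : coeff (R := R) 0 v * coeff (R := R) m (v ^ 2) =
      coeff (R := R) m (v ^ 3) - ∑ p ∈ (antidiagonal m).erase (0, m),
        coeff (R := R) p.1 v * coeff (R := R) p.2 (v ^ 2) := by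
    rw [hexp, ← Finset.add_sum_erase _ _ hmem0]
    ring
  rw [hsplit, mul_sub]
  refine I.sub_mem h3 (I.mul_mem_left _ (I.sum_mem fun p hp => ?_))
  have hmem' := Finset.HasAntidiagonal.mem_antidiagonal.mp (Finset.mem_of_mem_erase hp)
  have hne := Finset.ne_of_mem_erase hp
  refine I.mul_mem_left _ (hc p.2 ?_)
  rcases Nat.eq_zero_or_pos p.1 with h0 | h0
  · exact absurd (by rw [Prod.ext_iff]; omega) hne
  · omega

end Helpers

/-- Let `S` be the symmetric algebra of a vector space `T` (modelled as a polynomial ring on a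
basis `σ` of `T`), `I ⊆ S` a homogeneous ideal, and for `k ≥ 0` let `J k` be the ideal of the
power series ring `S[[t]]` generated by `I` and `t^k`. If `v(t) = v₀ + t v₁ + ⋯` is a curve with
each coefficient `vᵢ ∈ T` (homogeneous of degree 1), `m > 0`, `v(t)² ∈ J m` and `v₀² ∈ I`, then
`v(t)^s ∈ J (m + s - 2)` for every `s ≥ 2`. -/
theorem pow_mem_of_sq_mem {σ : Type*}
    (I : Ideal (MvPolynomial σ ℂ))
    (hI : ∀ f ∈ I, ∀ d : ℕ, MvPolynomial.homogeneousComponent d f ∈ I)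
    (v : PowerSeries (MvPolynomial σ ℂ))
    (hv : ∀ i : ℕ, (PowerSeries.coeff (R := MvPolynomial σ ℂ) i v).IsHomogeneous 1)
    (J : ℕ → Ideal (PowerSeries (MvPolynomial σ ℂ)))
    (hJ : ∀ k : ℕ, J k = Ideal.span
        ((PowerSeries.C (R := MvPolynomial σ ℂ)) '' (I : Set (MvPolynomial σ ℂ))
          ∪ {(PowerSeries.X : PowerSeries (MvPolynomial σ ℂ)) ^ k}))
    (m : ℕ) (hm : 0 < m)
    (hv2 : v ^ 2 ∈ J m)
    (hv0 : (PowerSeries.coeff (R := MvPolynomial σ ℂ) 0 v) ^ 2 ∈ I) :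
    ∀ s : ℕ, 2 ≤ s → v ^ s ∈ J (m + s - 2) := by
  have hc : ∀ i < m, coeff (R := MvPolynomial σ ℂ) i (v ^ 2) ∈ I := by
    rw [hJ m] at hv2
    exact coeff_mem_of_mem_spanJ I m _ hv2
  -- dividing by m : the key membership
  have hkey : coeff (R := MvPolynomial σ ℂ) 0 v * coeff (R := MvPolynomial σ ℂ) m (v ^ 2) ∈ I := by
    have h1 := key_smul_mem I v m hm hc
    have h2 : (MvPolynomial.C ((m : ℂ)⁻¹) : MvPolynomial σ ℂ) *
        ((m : MvPolynomial σ ℂ) *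
          (coeff (R := MvPolynomial σ ℂ) 0 v * coeff (R := MvPolynomial σ ℂ) m (v ^ 2))) =
        coeff (R := MvPolynomial σ ℂ) 0 v * coeff (R := MvPolynomial σ ℂ) m (v ^ 2) := by
      rw [← map_natCast (MvPolynomial.C : ℂ →+* MvPolynomial σ ℂ) m, ← mul_assoc, ← map_mul,
        inv_mul_cancel₀ (Nat.cast_ne_zero.mpr hm.ne' : (m : ℂ) ≠ 0), map_one, one_mul]
    rw [← h2]
    exact I.mul_mem_left _ h1
  -- main two-part induction
  have main : ∀ r : ℕ, (∀ i < m + r, coeff (R := MvPolynomial σ ℂ) i (v ^ (r + 2)) ∈ I) ∧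
      coeff (R := MvPolynomial σ ℂ) 0 v * coeff (R := MvPolynomial σ ℂ) (m + r) (v ^ (r + 2)) ∈ I := by
    intro r
    induction r with
    | zero => exact ⟨fun i hi => hc i (by omega), hkey⟩
    | succ r ih =>
      have hpow : v ^ (r + 1 + 2) = v * v ^ (r + 2) := by ring
      constructor
      · intro i hi
        rw [hpow, coeff_mul]
        refine I.sum_mem fun p hp => ?_
        have hpsum := Finset.HasAntidiagonal.mem_antidiagonal.mp hp
        rcases Nat.eq_zero_or_pos p.1 with h0 | h0
        · have h2 : p.2 = i := by omega
          rcases Nat.lt_or_ge i (m + r) with hlt | hge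
          · rw [h0, h2]; exact I.mul_mem_left _ (ih.1 i hlt)
          · have hi' : i = m + r := by omega
            rw [h0, h2, hi']; exact ih.2
        · exact I.mul_mem_left _ (ih.1 p.2 (by omega))
      · rw [hpow, coeff_mul, Finset.mul_sum]
        refine I.sum_mem fun p hp => ?_
        obtain ⟨p1, p2⟩ := p
        have hpsum : p1 + p2 = m + (r + 1) := Finset.HasAntidiagonal.mem_antidiagonal.mp hp
        rcases p1 with _ | p1
        · -- p1 = 0 : use v₀² ∈ I
          have heq : coeff (R := MvPolynomial σ ℂ) 0 v * (coeff (R := MvPolynomial σ ℂ) 0 v *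
              coeff (R := MvPolynomial σ ℂ) p2 (v ^ (r + 2))) =
              coeff (R := MvPolynomial σ ℂ) p2 (v ^ (r + 2)) *
                (coeff (R := MvPolynomial σ ℂ) 0 v) ^ 2 := by ring
          rw [heq]
          exact I.mul_mem_left _ hv0
        rcases p1 with _ | p1
        · -- p1 = 1 : use ih.2
          have h2' : p2 = m + r := by omega
          subst h2'
          have heq : coeff (R := MvPolynomial σ ℂ) 0 v * (coeff (R := MvPolynomial σ ℂ) 1 v *
              coeff (R := MvPolynomial σ ℂ) (m + r) (v ^ (r + 2))) =
              coeff (R := MvPolynomial σ ℂ) 1 v * (coeff (R := MvPolynomial σ ℂ) 0 v *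
                coeff (R := MvPolynomial σ ℂ) (m + r) (v ^ (r + 2))) := by ring
          rw [heq]
          exact I.mul_mem_left _ ih.2
        · -- p1 ≥ 2
          exact I.mul_mem_left _ (I.mul_mem_left _ (ih.1 p2 (by omega)))
  intro s hs
  obtain ⟨r, rfl⟩ : ∃ r, s = r + 2 := ⟨s - 2, by omega⟩
  rw [hJ]
  apply mem_spanJ_of_coeff_mem
  intro i hi
  exact (main r).1 i (by omega)
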